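/- Every ideal of finite structures of signature μ that has the amalgamation property and has cardinality at most ℵ₁ is representable. -/

import Mathlib

/-- A relational structure of signature `μ : I → ℕ`. -/
structure RelStruct {I : Type} (μ : I → ℕ) : Type 1 where
  carrier : Type
  rel : ∀ i, (Fin (μ i) → carrier) → Prop

namespace RelStruct

variable {I : Type} {μ : I → ℕ}

/-- `f` is an embedding of relational structures. -/
def IsEmbedding (A B : RelStruct μ) (f : A.carrier → B.carrier) : Prop :=
  Function.Injective f ∧ ∀ i (x : Fin (μ i) → A.carrier), A.rel i x ↔ B.rel i (f ∘ x)

/-- `A` embeds into `B`. -/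
def Embeds (A B : RelStruct μ) : Prop := ∃ f, IsEmbedding A B f

/-- The age of `A`: (the isomorphism-closed set of) all finite structures embeddable in `A`,
i.e. isomorphic to a substructure of `A` induced on a finite subset. -/
def age (A : RelStruct μ) : Set (RelStruct μ) :=
  {B | Finite B.carrier ∧ Embeds B A}

/-- An ideal in the poset of isomorphism types of finite structures, encoded as an
isomorphism-closed set of finite structures which is nonempty, downward closed under
embeddability, and up-directed. -/
def IsIdeal (𝒜 : Set (RelStruct μ)) : Prop :=
  𝒜.Nonempty ∧ (∀ B ∈ 𝒜, Finite B.carrier) ∧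
  (∀ B C : RelStruct μ, Finite B.carrier → Embeds B C → C ∈ 𝒜 → B ∈ 𝒜) ∧
  (∀ B ∈ 𝒜, ∀ C ∈ 𝒜, ∃ D ∈ 𝒜, Embeds B D ∧ Embeds C D)

/-- Isomorphism of relational structures. -/
def Iso (A B : RelStruct μ) : Prop :=
  ∃ f : A.carrier ≃ B.carrier,
    ∀ i (x : Fin (μ i) → A.carrier), A.rel i x ↔ B.rel i (⇑f ∘ x)

/-- The number of isomorphism types of members of `𝒜`. -/
noncomputable def numTypes (𝒜 : Set (RelStruct μ)) : Cardinal :=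
  Cardinal.mk (Quot (fun A B : 𝒜 => Iso A.1 B.1))

/-- A class of structures has the amalgamation property. -/
def AmalgamationProperty (𝒞 : Set (RelStruct μ)) : Prop :=
  ∀ A A₁ A₂, A ∈ 𝒞 → A₁ ∈ 𝒞 → A₂ ∈ 𝒞 →
    ∀ (f₁ : A.carrier → A₁.carrier) (f₂ : A.carrier → A₂.carrier),
      IsEmbedding A A₁ f₁ → IsEmbedding A A₂ f₂ →
      ∃ B ∈ 𝒞, ∃ (g₁ : A₁.carrier → B.carrier) (g₂ : A₂.carrier → B.carrier),
        IsEmbedding A₁ B g₁ ∧ IsEmbedding A₂ B g₂ ∧ g₁ ∘ f₁ = g₂ ∘ f₂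

end RelStruct

/-! ### Auxiliary infrastructure for the proof -/

namespace RepAux

open RelStruct Set

variable {I : Type} {μ : I → ℕ}

/-! #### Basic lemmas about embeddings and isomorphisms -/

theorem isEmbedding_comp {A B C : RelStruct μ} {f : A.carrier → B.carrier}
    {g : B.carrier → C.carrier} (hf : IsEmbedding A B f) (hg : IsEmbedding B C g) :
    IsEmbedding A C (g ∘ f) :=
  ⟨hg.1.comp hf.1, fun i x => (hf.2 i x).trans (hg.2 i (f ∘ x))⟩

theorem Embeds.trans {A B C : RelStruct μ} (h₁ : Embeds A B) (h₂ : Embeds B C) :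
    Embeds A C := by
  obtain ⟨f, hf⟩ := h₁; obtain ⟨g, hg⟩ := h₂
  exact ⟨g ∘ f, isEmbedding_comp hf hg⟩

theorem Iso.embeds {A B : RelStruct μ} (h : Iso A B) : Embeds A B := by
  obtain ⟨f, hf⟩ := h
  exact ⟨f, f.injective, hf⟩

theorem iso_refl (A : RelStruct μ) : Iso A A :=
  ⟨Equiv.refl _, fun _ _ => Iff.rfl⟩

theorem iso_symm {A B : RelStruct μ} (h : Iso A B) : Iso B A := by
  obtain ⟨f, hf⟩ := h
  refine ⟨f.symm, fun i x => ?_⟩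
  have := hf i (⇑f.symm ∘ x)
  rw [this]
  have : ⇑f ∘ ⇑f.symm ∘ x = x := by funext k; exact f.apply_symm_apply (x k)
  rw [this]

theorem iso_trans {A B C : RelStruct μ} (h₁ : Iso A B) (h₂ : Iso B C) : Iso A C := by
  obtain ⟨f, hf⟩ := h₁; obtain ⟨g, hg⟩ := h₂
  exact ⟨f.trans g, fun i x => (hf i x).trans (hg i (⇑f ∘ x))⟩

/-! #### Partial structures over an ambient type -/

/-- A partial structure on the ambient type `V`: a domain together with relations
whose support lies in the domain. -/
structure PS {I : Type} (μ : I → ℕ) (V : Type) where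
  s : Set V
  rel : ∀ i, (Fin (μ i) → V) → Prop
  dom : ∀ i x, rel i x → ∀ k, x k ∈ s

variable {V : Type}

/-- The relational structure induced by a partial structure on a subset of `V`. -/
def structOn (P : PS μ V) (t : Set V) : RelStruct μ :=
  ⟨↥t, fun i x => P.rel i fun k => (x k : V)⟩

/-- `Q` extends `P`. -/
def PS.le (P Q : PS μ V) : Prop :=
  P.s ⊆ Q.s ∧ ∀ i (x : Fin (μ i) → V), (∀ k, x k ∈ P.s) → (P.rel i x ↔ Q.rel i x)

theorem PS.le.refl (P : PS μ V) : PS.le P P := ⟨Set.Subset.refl _, fun _ _ _ => Iff.rfl⟩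

theorem PS.le.trans {P Q R : PS μ V} (h₁ : PS.le P Q) (h₂ : PS.le Q R) : PS.le P R :=
  ⟨h₁.1.trans h₂.1, fun i x hx => (h₁.2 i x hx).trans (h₂.2 i x fun k => h₁.1 (hx k))⟩

theorem embeds_structOn_le {P Q : PS μ V} (h : PS.le P Q) {t u : Set V}
    (ht : t ⊆ P.s) (htu : t ⊆ u) : Embeds (structOn P t) (structOn Q u) := by
  refine ⟨fun x => ⟨x.1, htu x.2⟩, fun a b hab => Subtype.ext (Subtype.mk_eq_mk.mp hab),
    fun i x => ?_⟩
  exact h.2 i (fun k => Subtype.val (x k)) fun k => ht (x k).2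

theorem embeds_structOn_le' {P Q : PS μ V} (h : PS.le P Q) {t u : Set V}
    (ht : t ⊆ P.s) (htu : t ⊆ u) : Embeds (structOn Q t) (structOn P u) := by
  refine ⟨fun x => ⟨x.1, htu x.2⟩, fun a b hab => Subtype.ext (Subtype.mk_eq_mk.mp hab),
    fun i x => ?_⟩
  exact (h.2 i (fun k => Subtype.val (x k)) fun k => ht (x k).2).symm

theorem structOn_finite (P : PS μ V) (t : Set V) (ht : t.Finite) :
    Finite (structOn P t).carrier := ht.to_subtype

/-- A "good" partial structure: countable domain, and every finite induced
substructure belongs to `𝒜`. -/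
def Good (𝒜 : Set (RelStruct μ)) (P : PS μ V) : Prop :=
  P.s.Countable ∧ ∀ t : Set V, t ⊆ P.s → t.Finite → structOn P t ∈ 𝒜

/-! #### Pushing a finite structure into the ambient type -/

/-- The partial structure obtained by pushing `W` forward along `ρ`. -/
def PS.push (W : RelStruct μ) (ρ : W.carrier → V) : PS μ V where
  s := Set.range ρ
  rel := fun i x => ∃ y : Fin (μ i) → W.carrier, (∀ k, ρ (y k) = x k) ∧ W.rel i y
  dom := by rintro i x ⟨y, hy, -⟩ k; exact ⟨y k, hy k⟩

theorem push_rel_iff {W : RelStruct μ} {ρ : W.carrier → V} (hρ : Function.Injective ρ)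
    (i : I) (y : Fin (μ i) → W.carrier) :
    (PS.push W ρ).rel i (fun k => ρ (y k)) ↔ W.rel i y := by
  constructor
  · rintro ⟨z, hz, hrel⟩
    have : z = y := funext fun k => hρ (hz k)
    exact this ▸ hrel
  · intro h
    exact ⟨y, fun k => rfl, h⟩

/-- Every finite induced substructure of a pushforward of `W ∈ 𝒜` is in `𝒜`. -/
theorem push_structOn_mem {𝒜 : Set (RelStruct μ)} (hid : IsIdeal 𝒜)
    {W : RelStruct μ} (hW : W ∈ 𝒜) {ρ : W.carrier → V} (hρ : Function.Injective ρ)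
    {t : Set V} (htsub : t ⊆ Set.range ρ) : structOn (PS.push W ρ) t ∈ 𝒜 := by
  have hWfin : Finite W.carrier := hid.2.1 W hW
  have htfin : t.Finite := (Set.finite_range ρ).subset htsub
  have hfin : Finite (structOn (PS.push W ρ) t).carrier := htfin.to_subtype
  refine hid.2.2.1 _ W hfin ?_ hW
  refine ⟨fun x => (htsub x.2).choose, ?_, ?_⟩
  · intro a b hab
    have ha : ρ ((htsub a.2).choose) = a.1 := (htsub a.2).choose_spec
    have hb : ρ ((htsub b.2).choose) = b.1 := (htsub b.2).choose_spec
    apply Subtype.ext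
    rw [← ha, ← hb]
    exact congrArg ρ hab
  · intro i x
    have hx : ∀ k, ρ ((htsub (x k).2).choose) = (x k).1 := fun k => (htsub (x k).2).choose_spec
    show (PS.push W ρ).rel i (fun k => Subtype.val (x k)) ↔ _
    have : (fun k => Subtype.val (x k)) = fun k => ρ ((htsub (x k).2).choose) := by
      funext k; exact (hx k).symm
    rw [this, push_rel_iff hρ]
    rfl

/-- `Q` is extended by the pushforward of `W` when `W` amalgamates over `Q`. -/
theorem le_push {Q : PS μ V} {W : RelStruct μ} {g : (structOn Q Q.s).carrier → W.carrier}
    (hemb : IsEmbedding (structOn Q Q.s) W g) {ρ : W.carrier → V}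
    (hρ : Function.Injective ρ) (hcomp : ∀ q : ↥Q.s, ρ (g q) = q.1) :
    PS.le Q (PS.push W ρ) := by
  constructor
  · intro q hq
    exact ⟨g ⟨q, hq⟩, hcomp ⟨q, hq⟩⟩
  · intro i x hx
    have hxv : (fun k => ρ (g ⟨x k, hx k⟩)) = x := by
      funext k; exact hcomp ⟨x k, hx k⟩
    constructor
    · intro h
      have : W.rel i (g ∘ fun k => (⟨x k, hx k⟩ : ↥Q.s)) := (hemb.2 i _).mp h
      rw [← hxv]
      exact ⟨_, fun k => rfl, this⟩
    · intro h
      rw [← hxv] at h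
      rw [push_rel_iff hρ] at h
      exact (hemb.2 i (fun k => (⟨x k, hx k⟩ : ↥Q.s))).mpr h

/-- A finite structure can be injected into an infinite ambient type, respecting a
given embedding from a finite subset. -/
theorem exists_rho [Infinite V] {W : RelStruct μ} (hWfin : Finite W.carrier)
    {s₀ : Set V} (hs₀ : s₀.Finite) (g : ↥s₀ → W.carrier) (hg : Function.Injective g) :
    ∃ ρ : W.carrier → V, Function.Injective ρ ∧ ∀ q : ↥s₀, ρ (g q) = q.1 := by
  classical
  have hcompl : (s₀ᶜ : Set V).Infinite := hs₀.infinite_compl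
  have : Infinite ↥(s₀ᶜ : Set V) := hcompl.to_subtype
  have hcnt : Countable {w : W.carrier // w ∉ Set.range g} := Subtype.countable
  obtain ⟨f', hf'⟩ := Countable.exists_injective_nat {w : W.carrier // w ∉ Set.range g}
  let ι : ℕ ↪ ↥(s₀ᶜ : Set V) := Infinite.natEmbedding _
  refine ⟨fun w => if h : w ∈ Set.range g then h.choose.1 else (ι (f' ⟨w, h⟩)).1, ?_, ?_⟩
  · intro w₁ w₂ heq
    by_cases h1 : w₁ ∈ Set.range g <;> by_cases h2 : w₂ ∈ Set.range g
    · simp only [dif_pos h1, dif_pos h2] at heq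
      have e1 : g h1.choose = w₁ := h1.choose_spec
      have e2 : g h2.choose = w₂ := h2.choose_spec
      rw [← e1, ← e2]
      exact congrArg g (Subtype.ext heq)
    · simp only [dif_pos h1, dif_neg h2] at heq
      exact absurd (heq ▸ h1.choose.2) (ι (f' ⟨w₂, h2⟩)).2
    · simp only [dif_neg h1, dif_pos h2] at heq
      exact absurd (heq ▸ (ι (f' ⟨w₁, h1⟩)).2) (by simpa using h2.choose.2)
    · simp only [dif_neg h1, dif_neg h2] at heq
      have := hf' (ι.injective (Subtype.ext heq))
      exact congrArg Subtype.val this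
  · intro q
    have h : g q ∈ Set.range g := ⟨q, rfl⟩
    simp only [dif_pos h]
    exact congrArg Subtype.val (hg h.choose_spec)

/-! #### Unions of chains of partial structures -/

/-- Union of a family of partial structures. -/
def PS.iUnionPS {ι : Type} (K : ι → PS μ V) : PS μ V where
  s := ⋃ j, (K j).s
  rel := fun i x => ∃ j, (K j).rel i x
  dom := by rintro i x ⟨j, hj⟩ k; exact Set.mem_iUnion.mpr ⟨j, (K j).dom i x hj k⟩

theorem le_iUnionPS {ι : Type} {K : ι → PS μ V}
    (hdir : ∀ a b : ι, PS.le (K a) (K b) ∨ PS.le (K b) (K a)) (a : ι) :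
    PS.le (K a) (PS.iUnionPS K) := by
  constructor
  · exact fun v hv => Set.mem_iUnion.mpr ⟨a, hv⟩
  · intro i x hx
    constructor
    · exact fun h => ⟨a, h⟩
    · rintro ⟨b, hb⟩
      rcases hdir a b with h | h
      · exact (h.2 i x hx).mpr hb
      · exact (h.2 i x (fun k => (K b).dom i x hb k)).mp hb

theorem finite_subset_iUnionPS {ι : Type} [Nonempty ι] {K : ι → PS μ V}
    (hdir : ∀ a b : ι, PS.le (K a) (K b) ∨ PS.le (K b) (K a))
    {t : Set V} (ht : t.Finite) (hsub : t ⊆ (PS.iUnionPS K).s) : ∃ a, t ⊆ (K a).s := by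
  have key : ∀ u : Set V, u.Finite → u ⊆ (PS.iUnionPS K).s → ∃ a, u ⊆ (K a).s := by
    intro u hu
    refine Set.Finite.induction_on
      (motive := fun u _ => u ⊆ (PS.iUnionPS K).s → ∃ a, u ⊆ (K a).s) u hu ?_ ?_
    · intro _; exact ⟨Classical.arbitrary ι, by simp⟩
    · intro x v hxv hvfin ih hins
      obtain ⟨a, ha⟩ := ih fun w hw => hins (Set.mem_insert_of_mem x hw)
      obtain ⟨b, hb⟩ := Set.mem_iUnion.mp (hins (Set.mem_insert x v))
      rcases hdir a b with h | h
      · exact ⟨b, Set.insert_subset hb (ha.trans h.1)⟩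
      · exact ⟨a, Set.insert_subset (h.1 hb) ha⟩
  exact key t ht hsub

theorem good_iUnionPS {𝒜 : Set (RelStruct μ)} (hid : IsIdeal 𝒜) {ι : Type}
    [Nonempty ι] [Countable ι]
    {K : ι → PS μ V} (hdir : ∀ a b : ι, PS.le (K a) (K b) ∨ PS.le (K b) (K a))
    (hg : ∀ a, Good 𝒜 (K a)) : Good 𝒜 (PS.iUnionPS K) := by
  constructor
  · exact Set.countable_iUnion fun a => (hg a).1
  · intro t htsub htfin
    obtain ⟨a, ha⟩ := finite_subset_iUnionPS hdir htfin htsub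
    have h1 : structOn (K a) t ∈ 𝒜 := (hg a).2 t ha htfin
    have h2 := embeds_structOn_le' (le_iUnionPS hdir a) ha (Set.Subset.refl t)
    exact hid.2.2.1 _ _ htfin.to_subtype h2 h1

/-! #### The ω-chain of amalgamations -/

/-- Data for one step of the ω-chain: a finite partial structure `Q` realizing a copy
of the induced structure on `D n`. -/
structure StepData (𝒜 : Set (RelStruct μ)) {V : Type} (P : PS μ V) (D : ℕ → Set V)
    (n : ℕ) where
  Q : PS μ V
  fin : Q.s.Finite
  mem : structOn Q Q.s ∈ 𝒜
  h : ↥(D n) → ↥Q.s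
  emb : IsEmbedding (structOn P (D n)) (structOn Q Q.s) h

theorem step_zero {𝒜 : Set (RelStruct μ)} [Infinite V] (hid : IsIdeal 𝒜)
    {P : PS μ V} (hP : Good 𝒜 P) {B : RelStruct μ} (hB : B ∈ 𝒜)
    (D : ℕ → Set V) (hDsub : ∀ n, D n ⊆ P.s) (hDfin : ∀ n, (D n).Finite) :
    ∃ S : StepData 𝒜 P D 0, Embeds B (structOn S.Q S.Q.s) := by
  have hA0 : structOn P (D 0) ∈ 𝒜 := hP.2 _ (hDsub 0) (hDfin 0)
  obtain ⟨E, hE, ⟨kk, hk⟩, ⟨bb, hb⟩⟩ := hid.2.2.2 _ hA0 B hB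
  have hEfin : Finite E.carrier := hid.2.1 E hE
  obtain ⟨ρ, hρ, -⟩ := exists_rho hEfin Set.finite_empty
    (fun x : ↥(∅ : Set V) => absurd x.2 (Set.notMem_empty x.1))
    (fun a _ _ => absurd a.2 (Set.notMem_empty a.1))
  refine ⟨⟨PS.push E ρ, Set.finite_range ρ, push_structOn_mem hid hE hρ (Set.Subset.refl _),
      fun d => ⟨ρ (kk d), ⟨kk d, rfl⟩⟩, ?_⟩, ?_⟩
  · exact ⟨fun a b hab => hk.1 (hρ (Subtype.mk_eq_mk.mp hab)),
      fun i x => (hk.2 i x).trans (push_rel_iff hρ i fun k => kk (x k)).symm⟩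
  · exact ⟨fun w => ⟨ρ (bb w), ⟨bb w, rfl⟩⟩,
      fun a b hab => hb.1 (hρ (Subtype.mk_eq_mk.mp hab)),
      fun i x => (hb.2 i x).trans (push_rel_iff hρ i fun k => bb (x k)).symm⟩

theorem step_succ {𝒜 : Set (RelStruct μ)} [Infinite V] (hid : IsIdeal 𝒜)
    (hAP : AmalgamationProperty 𝒜) {P : PS μ V} (hP : Good 𝒜 P)
    (D : ℕ → Set V) (hDsub : ∀ n, D n ⊆ P.s) (hDfin : ∀ n, (D n).Finite)
    (hDmono : ∀ n, D n ⊆ D (n + 1)) (n : ℕ) (S : StepData 𝒜 P D n) :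
    ∃ T : StepData 𝒜 P D (n + 1), PS.le S.Q T.Q ∧
      ∀ d : ↥(D n), ((T.h ⟨d.1, hDmono n d.2⟩) : V) = ((S.h d : ↥S.Q.s) : V) := by
  have hA : structOn P (D n) ∈ 𝒜 := hP.2 _ (hDsub n) (hDfin n)
  have hA1 : structOn P (D (n + 1)) ∈ 𝒜 := hP.2 _ (hDsub (n + 1)) (hDfin (n + 1))
  have hf₁ : IsEmbedding (structOn P (D n)) (structOn P (D (n + 1)))
      (fun d => ⟨d.1, hDmono n d.2⟩) :=
    ⟨fun a b hab => Subtype.ext (Subtype.mk_eq_mk.mp hab), fun i x => Iff.rfl⟩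
  obtain ⟨W, hW, g₁, g₂, hg₁, hg₂, hcomm⟩ :=
    hAP _ _ _ hA hA1 S.mem (fun d => ⟨d.1, hDmono n d.2⟩) S.h hf₁ S.emb
  have hWfin : Finite W.carrier := hid.2.1 W hW
  obtain ⟨ρ, hρ, hρg⟩ := exists_rho hWfin S.fin g₂ hg₂.1
  refine ⟨⟨PS.push W ρ, Set.finite_range ρ, push_structOn_mem hid hW hρ (Set.Subset.refl _),
      fun d => ⟨ρ (g₁ d), ⟨g₁ d, rfl⟩⟩, ?_⟩, le_push hg₂ hρ hρg, ?_⟩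
  · exact ⟨fun a b hab => hg₁.1 (hρ (Subtype.mk_eq_mk.mp hab)),
      fun i x => (hg₁.2 i x).trans (push_rel_iff hρ i fun k => g₁ (x k)).symm⟩
  · intro d
    have h2 : g₁ ⟨d.1, hDmono n d.2⟩ = g₂ (S.h d) := congrFun hcomm d
    show ρ (g₁ ⟨d.1, hDmono n d.2⟩) = ((S.h d : ↥S.Q.s) : V)
    rw [h2]
    exact hρg (S.h d)

/-- The ω-chain of finite partial structures. -/
noncomputable def chainData {𝒜 : Set (RelStruct μ)} [Infinite V] (hid : IsIdeal 𝒜)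
    (hAP : AmalgamationProperty 𝒜) {P : PS μ V} (hP : Good 𝒜 P) {B : RelStruct μ}
    (hB : B ∈ 𝒜) (D : ℕ → Set V) (hDsub : ∀ n, D n ⊆ P.s) (hDfin : ∀ n, (D n).Finite)
    (hDmono : ∀ n, D n ⊆ D (n + 1)) : ∀ n, StepData 𝒜 P D n := fun n =>
  Nat.rec (step_zero hid hP hB D hDsub hDfin).choose
    (fun n S => (step_succ hid hAP hP D hDsub hDfin hDmono n S).choose) n

theorem chain_le {𝒜 : Set (RelStruct μ)} [Infinite V] (hid : IsIdeal 𝒜)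
    (hAP : AmalgamationProperty 𝒜) {P : PS μ V} (hP : Good 𝒜 P) {B : RelStruct μ}
    (hB : B ∈ 𝒜) (D : ℕ → Set V) (hDsub : ∀ n, D n ⊆ P.s) (hDfin : ∀ n, (D n).Finite)
    (hDmono : ∀ n, D n ⊆ D (n + 1)) :
    ∀ m n, m ≤ n → PS.le (chainData hid hAP hP hB D hDsub hDfin hDmono m).Q
      (chainData hid hAP hP hB D hDsub hDfin hDmono n).Q := by
  intro m n hmn
  induction n, hmn using Nat.le_induction with
  | base => exact PS.le.refl _
  | succ n hmn ih =>
    have hstep := (step_succ hid hAP hP D hDsub hDfin hDmono n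
      (chainData hid hAP hP hB D hDsub hDfin hDmono n)).choose_spec
    exact ih.trans hstep.1

theorem chain_compat {𝒜 : Set (RelStruct μ)} [Infinite V] (hid : IsIdeal 𝒜)
    (hAP : AmalgamationProperty 𝒜) {P : PS μ V} (hP : Good 𝒜 P) {B : RelStruct μ}
    (hB : B ∈ 𝒜) (D : ℕ → Set V) (hDsub : ∀ n, D n ⊆ P.s) (hDfin : ∀ n, (D n).Finite)
    (hDmono : ∀ n, D n ⊆ D (n + 1)) (hDm' : ∀ m n, m ≤ n → D m ⊆ D n) :
    ∀ m n (hmn : m ≤ n) (x : V) (hx : x ∈ D m),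
      (((chainData hid hAP hP hB D hDsub hDfin hDmono n).h ⟨x, hDm' m n hmn hx⟩ :
        ↥(chainData hid hAP hP hB D hDsub hDfin hDmono n).Q.s) : V) =
      (((chainData hid hAP hP hB D hDsub hDfin hDmono m).h ⟨x, hx⟩ :
        ↥(chainData hid hAP hP hB D hDsub hDfin hDmono m).Q.s) : V) := by
  intro m n hmn
  induction n, hmn using Nat.le_induction with
  | base => intro x hx; rfl
  | succ n hmn ih =>
    intro x hx
    have hstep := (step_succ hid hAP hP D hDsub hDfin hDmono n
      (chainData hid hAP hP hB D hDsub hDfin hDmono n)).choose_spec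
    have h1 := hstep.2 ⟨x, hDm' m n hmn hx⟩
    exact h1.trans (ih x hx)

theorem chain_zero_embeds {𝒜 : Set (RelStruct μ)} [Infinite V] (hid : IsIdeal 𝒜)
    (hAP : AmalgamationProperty 𝒜) {P : PS μ V} (hP : Good 𝒜 P) {B : RelStruct μ}
    (hB : B ∈ 𝒜) (D : ℕ → Set V) (hDsub : ∀ n, D n ⊆ P.s) (hDfin : ∀ n, (D n).Finite)
    (hDmono : ∀ n, D n ⊆ D (n + 1)) :
    Embeds B (structOn (chainData hid hAP hP hB D hDsub hDfin hDmono 0).Q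
      (chainData hid hAP hP hB D hDsub hDfin hDmono 0).Q.s) :=
  (step_zero hid hP hB D hDsub hDfin).choose_spec

theorem good_of_finite {𝒜 : Set (RelStruct μ)} (hid : IsIdeal 𝒜) {Q : PS μ V}
    (hfin : Q.s.Finite) (hmem : structOn Q Q.s ∈ 𝒜) : Good 𝒜 Q := by
  refine ⟨hfin.countable, fun t ht htfin => ?_⟩
  exact hid.2.2.1 _ _ htfin.to_subtype (embeds_structOn_le (PS.le.refl Q) ht ht) hmem

/-- Key extension lemma: a good countable partial structure can be extended to a good
countable partial structure realizing any prescribed member of `𝒜`. -/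
theorem extend_lemma {𝒜 : Set (RelStruct μ)} {V : Type} [Infinite V] [Nonempty V]
    (huniv : ¬(Set.univ : Set V).Countable) (hid : IsIdeal 𝒜)
    (hAP : AmalgamationProperty 𝒜) (P : PS μ V) (hP : Good 𝒜 P)
    (B : RelStruct μ) (hB : B ∈ 𝒜) :
    ∃ Q : PS μ V, PS.le P Q ∧ Good 𝒜 Q ∧ Embeds B (structOn Q Q.s) := by
  classical
  obtain ⟨e, he⟩ : ∃ e : ℕ → V, P.s ⊆ Set.range e := by
    rcases Set.eq_empty_or_nonempty P.s with h | h
    · exact ⟨fun _ => Classical.arbitrary V, by simp [h]⟩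
    · obtain ⟨f, hf⟩ := hP.1.exists_eq_range h
      exact ⟨f, hf.le⟩
  set D : ℕ → Set V := fun n => P.s ∩ (e '' {k | k < n}) with hD
  have hDsub : ∀ n, D n ⊆ P.s := fun n => Set.inter_subset_left
  have hDfin : ∀ n, (D n).Finite := fun n =>
    Set.Finite.inter_of_right ((Set.finite_Iio n).image e) _
  have hDm' : ∀ m n, m ≤ n → D m ⊆ D n := by
    intro m n hmn v hv
    exact ⟨hv.1, Set.image_mono (fun k (hk : k < m) => lt_of_lt_of_le hk hmn) hv.2⟩
  have hDmono : ∀ n, D n ⊆ D (n + 1) := fun n => hDm' n (n + 1) (Nat.le_succ n)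
  set ch := chainData hid hAP hP hB D hDsub hDfin hDmono with hch
  set K : ℕ → PS μ V := fun n => (ch n).Q with hK
  have hKle : ∀ m n, m ≤ n → PS.le (K m) (K n) :=
    chain_le hid hAP hP hB D hDsub hDfin hDmono
  have hdir : ∀ a b : ℕ, PS.le (K a) (K b) ∨ PS.le (K b) (K a) := by
    intro a b
    rcases le_total a b with h | h
    · exact Or.inl (hKle a b h)
    · exact Or.inr (hKle b a h)
  set M : PS μ V := PS.iUnionPS K with hM
  have hMgood : Good 𝒜 M :=
    good_iUnionPS hid hdir fun n => good_of_finite hid (ch n).fin (ch n).mem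
  -- the embedding of `P.s` into `M`
  have hcover : ∀ x : ↥P.s, ∃ n, (x : V) ∈ D n := by
    intro x
    obtain ⟨k, hk⟩ := he x.2
    exact ⟨k + 1, ⟨x.2, ⟨k, Nat.lt_succ_self k, hk⟩⟩⟩
  set nx : ↥P.s → ℕ := fun x => Nat.find (hcover x) with hnxdef
  have hnx : ∀ x, (x : V) ∈ D (nx x) := fun x => Nat.find_spec (hcover x)
  have hφmem : ∀ x : ↥P.s, (((ch (nx x)).h ⟨x.1, hnx x⟩ : ↥(K (nx x)).s) : V) ∈ M.s :=
    fun x => Set.mem_iUnion.mpr ⟨nx x, ((ch (nx x)).h ⟨x.1, hnx x⟩).2⟩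
  set φ : ↥P.s → ↥M.s := fun x => ⟨_, hφmem x⟩ with hφ
  have hφval : ∀ (x : ↥P.s) (n) (hxn : (x : V) ∈ D n),
      ((φ x : ↥M.s) : V) = (((ch n).h ⟨x.1, hxn⟩ : ↥(K n).s) : V) := by
    intro x n hxn
    have hm : nx x ≤ n := Nat.find_min' _ hxn
    exact (chain_compat hid hAP hP hB D hDsub hDfin hDmono hDm' (nx x) n hm x.1 (hnx x)).symm
  have hφemb : IsEmbedding (structOn P P.s) (structOn M M.s) φ := by
    constructor
    · show Function.Injective φ
      intro a b hab
      have hav : ((φ a : ↥M.s) : V) = ((φ b : ↥M.s) : V) := congrArg Subtype.val hab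
      have ha : (a : V) ∈ D (max (nx a) (nx b)) := hDm' _ _ (le_max_left _ _) (hnx a)
      have hb : (b : V) ∈ D (max (nx a) (nx b)) := hDm' _ _ (le_max_right _ _) (hnx b)
      rw [hφval a _ ha, hφval b _ hb] at hav
      have := (ch (max (nx a) (nx b))).emb.1 (Subtype.ext hav)
      exact Subtype.ext (Subtype.mk_eq_mk.mp this)
    · show ∀ i (x : Fin (μ i) → ↥P.s), P.rel i (fun k => ((x k : ↥P.s) : V)) ↔
        M.rel i fun k => ((φ (x k) : ↥M.s) : V)
      intro i x
      set n := Finset.univ.sup fun k => nx (x k) with hn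
      have hxk : ∀ k, ((x k : ↥P.s) : V) ∈ D n := fun k =>
        hDm' _ _ (Finset.le_sup (Finset.mem_univ k)) (hnx (x k))
      have h1 := (ch n).emb.2 i fun k => (⟨(x k).1, hxk k⟩ : ↥(D n))
      have h2 := (le_iUnionPS hdir n).2 i
        (fun k => (((ch n).h ⟨(x k).1, hxk k⟩ : ↥(K n).s) : V))
        (fun k => ((ch n).h ⟨(x k).1, hxk k⟩).2)
      have hv : (fun k => ((φ (x k) : ↥M.s) : V)) =
          fun k => (((ch n).h ⟨(x k).1, hxk k⟩ : ↥(K n).s) : V) :=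
        funext fun k => hφval (x k) n (hxk k)
      rw [hv]
      exact h1.trans h2
  -- relocate `M` so that it literally extends `P`
  have hPc : (P.sᶜ : Set V).Infinite := by
    by_contra hfin
    rw [Set.not_infinite] at hfin
    have hu := hP.1.union hfin.countable
    rw [Set.union_compl_self] at hu
    exact huniv hu
  haveI : Infinite ↥(P.sᶜ : Set V) := hPc.to_subtype
  haveI : Countable ↥M.s := hMgood.1.to_subtype
  obtain ⟨cf, hcf⟩ := Countable.exists_injective_nat ↥M.s
  set ν : ↥M.s → ↥(P.sᶜ : Set V) := fun m => Infinite.natEmbedding _ (cf m) with hν'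
  have hν : Function.Injective ν := fun a b hab => hcf ((Infinite.natEmbedding _).injective hab)
  set θ : ↥M.s → V := Function.extend φ (fun p => (p : V)) (fun m => ((ν m : ↥(P.sᶜ : Set V)) : V)) with hθ'
  have hθφ : ∀ p : ↥P.s, θ (φ p) = (p : V) := fun p => hφemb.1.extend_apply _ _ p
  have hθn : ∀ m, m ∉ Set.range φ → θ m = ((ν m : ↥(P.sᶜ : Set V)) : V) := fun m hm =>
    Function.extend_apply' _ _ _ hm
  have hθmem : ∀ m, m ∉ Set.range φ → θ m ∉ P.s := by
    intro m hm
    rw [hθn m hm]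
    exact (ν m).2
  have hθP : ∀ m, θ m ∈ P.s → ∃ p : ↥P.s, φ p = m ∧ (p : V) = θ m := by
    intro m hm
    by_cases h : m ∈ Set.range φ
    · obtain ⟨p, hp⟩ := h
      exact ⟨p, hp, by rw [← hp, hθφ]⟩
    · exact absurd hm (hθmem m h)
  have hθinj : Function.Injective θ := by
    intro a b hab
    by_cases ha : a ∈ Set.range φ <;> by_cases hb : b ∈ Set.range φ
    · obtain ⟨p, hp⟩ := ha
      obtain ⟨q, hq⟩ := hb
      rw [← hp, ← hq, hθφ, hθφ] at hab
      rw [← hp, ← hq, Subtype.ext hab]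
    · obtain ⟨p, hp⟩ := ha
      rw [← hp, hθφ] at hab
      exact absurd (by rw [← hab]; exact p.2) (hθmem b hb)
    · obtain ⟨q, hq⟩ := hb
      rw [← hq, hθφ] at hab
      exact absurd (by rw [hab]; exact q.2) (hθmem a ha)
    · rw [hθn a ha, hθn b hb] at hab
      exact hν (Subtype.ext hab)
  -- the relocated partial structure
  set Qf : PS μ V := ⟨Set.range θ,
    fun i x => ∃ y : Fin (μ i) → ↥M.s, (∀ k, θ (y k) = x k) ∧
      M.rel i fun k => ((y k : ↥M.s) : V),
    by rintro i x ⟨y, hy, -⟩ k; exact ⟨y k, hy k⟩⟩ with hQf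
  have hrelocemb : IsEmbedding (structOn M M.s) (structOn Qf Qf.s)
      (fun m => ⟨θ m, ⟨m, rfl⟩⟩) := by
    constructor
    · intro a b hab
      exact hθinj (Subtype.mk_eq_mk.mp hab)
    · show ∀ i (x : Fin (μ i) → ↥M.s), M.rel i (fun k => ((x k : ↥M.s) : V)) ↔
        Qf.rel i fun k => θ (x k)
      intro i x
      constructor
      · intro h
        exact ⟨x, fun k => rfl, h⟩
      · rintro ⟨y, hy, hr⟩
        have : y = x := funext fun k => hθinj (hy k)
        rw [← this]
        exact hr
  refine ⟨Qf, ⟨?_, ?_⟩, ⟨?_, ?_⟩, ?_⟩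
  · -- P.s ⊆ Qf.s
    intro p hp
    exact ⟨φ ⟨p, hp⟩, hθφ ⟨p, hp⟩⟩
  · -- relations agree on P.s
    intro i x hx
    constructor
    · intro h
      have h1 := (hφemb.2 i fun k => (⟨x k, hx k⟩ : ↥P.s)).mp h
      refine ⟨fun k => φ ⟨x k, hx k⟩, fun k => hθφ ⟨x k, hx k⟩, h1⟩
    · rintro ⟨y, hy, hr⟩
      have hyk : ∀ k, ∃ p : ↥P.s, φ p = y k ∧ (p : V) = θ (y k) := fun k =>
        hθP (y k) (by rw [hy k]; exact hx k)
      choose p hp1 hp2 using hyk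
      have h1 : M.rel i fun k => ((φ (p k) : ↥M.s) : V) := by
        have : (fun k => ((φ (p k) : ↥M.s) : V)) = fun k => ((y k : ↥M.s) : V) := by
          funext k; rw [hp1 k]
        rw [this]
        exact hr
      have h2 := (hφemb.2 i p).mpr h1
      have h3 : (fun k => ((p k : ↥P.s) : V)) = x := by
        funext k
        rw [hp2 k, hy k]
      rw [← h3]
      exact h2
  · -- Qf.s countable
    exact Set.countable_range θ
  · -- finite induced substructures of Qf are in 𝒜
    intro t htsub htfin
    haveI : Finite ↥t := htfin.to_subtype
    set j : ↥t → ↥M.s := fun x => (htsub x.2).choose with hj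
    have hjθ : ∀ x : ↥t, θ (j x) = (x : V) := fun x => (htsub x.2).choose_spec
    have hjinj : Function.Injective j := by
      intro a b hab
      apply Subtype.ext
      rw [← hjθ a, ← hjθ b, hab]
    set u : Set V := Set.range fun x : ↥t => ((j x : ↥M.s) : V) with hu
    have husub : u ⊆ M.s := by rintro v ⟨x, rfl⟩; exact (j x).2
    have hufin : u.Finite := Set.finite_range _
    have humem : structOn M u ∈ 𝒜 := hMgood.2 u husub hufin
    refine hid.2.2.1 _ (structOn M u) htfin.to_subtype ⟨fun x => ⟨((j x : ↥M.s) : V), ⟨x, rfl⟩⟩, ?_, ?_⟩ humem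
    · intro a b hab
      exact hjinj (Subtype.ext (Subtype.mk_eq_mk.mp hab))
    · show ∀ i (x : Fin (μ i) → ↥t), Qf.rel i (fun k => ((x k : ↥t) : V)) ↔
        M.rel i fun k => ((j (x k) : ↥M.s) : V)
      intro i x
      constructor
      · rintro ⟨y, hy, hr⟩
        have hyx : y = fun k => j (x k) :=
          funext fun k => hθinj ((hy k).trans (hjθ (x k)).symm)
        rw [hyx] at hr
        exact hr
      · intro h
        exact ⟨fun k => j (x k), fun k => hjθ (x k), h⟩
  · -- B embeds
    have hB0 := chain_zero_embeds hid hAP hP hB D hDsub hDfin hDmono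
    have hBM : Embeds B (structOn M M.s) :=
      Embeds.trans hB0 (embeds_structOn_le (le_iUnionPS hdir 0) (Set.Subset.refl _)
        (fun v hv => Set.mem_iUnion.mpr ⟨0, hv⟩))
    exact Embeds.trans hBM ⟨_, hrelocemb⟩

/-! #### Planting a single structure -/

theorem plant_lemma {𝒜 : Set (RelStruct μ)} {V : Type} [Infinite V] (hid : IsIdeal 𝒜)
    (B : RelStruct μ) (hB : B ∈ 𝒜) :
    ∃ Q : PS μ V, Good 𝒜 Q ∧ Embeds B (structOn Q Q.s) := by
  have hBfin : Finite B.carrier := hid.2.1 B hB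
  obtain ⟨ρ, hρ, -⟩ := exists_rho hBfin Set.finite_empty
    (fun x : ↥(∅ : Set V) => absurd x.2 (Set.notMem_empty x.1))
    (fun a _ _ => absurd a.2 (Set.notMem_empty a.1))
  refine ⟨PS.push B ρ, good_of_finite hid (Set.finite_range ρ)
    (push_structOn_mem hid hB hρ (Set.Subset.refl _)), ?_⟩
  exact ⟨fun w => ⟨ρ w, ⟨w, rfl⟩⟩, fun a b hab => hρ (Subtype.mk_eq_mk.mp hab),
    fun i x => (push_rel_iff hρ i x).symm⟩

/-! #### The transfinite chain -/

open scoped Classical in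
/-- One step of the transfinite construction. -/
noncomputable def nextPS {𝒜 : Set (RelStruct μ)} {V : Type} [Infinite V] [Nonempty V]
    (huniv : ¬(Set.univ : Set V).Countable) (hid : IsIdeal 𝒜)
    (hAP : AmalgamationProperty 𝒜) (P : PS μ V) (B : RelStruct μ) : PS μ V :=
  if h : Good 𝒜 P ∧ B ∈ 𝒜 then (extend_lemma huniv hid hAP P h.1 B h.2).choose
  else P

theorem nextPS_spec {𝒜 : Set (RelStruct μ)} {V : Type} [Infinite V] [Nonempty V]
    (huniv : ¬(Set.univ : Set V).Countable) (hid : IsIdeal 𝒜)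
    (hAP : AmalgamationProperty 𝒜) {P : PS μ V} {B : RelStruct μ}
    (h1 : Good 𝒜 P) (h2 : B ∈ 𝒜) :
    PS.le P (nextPS huniv hid hAP P B) ∧ Good 𝒜 (nextPS huniv hid hAP P B) ∧
      Embeds B (structOn (nextPS huniv hid hAP P B) (nextPS huniv hid hAP P B).s) := by
  have hd : Good 𝒜 P ∧ B ∈ 𝒜 := ⟨h1, h2⟩
  simp only [nextPS, dif_pos hd]
  exact (extend_lemma huniv hid hAP P hd.1 B hd.2).choose_spec

/-- The base of the transfinite construction. -/
noncomputable def basePS {𝒜 : Set (RelStruct μ)} (V : Type) [Infinite V]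
    (hid : IsIdeal 𝒜) : PS μ V :=
  (plant_lemma (V := V) hid hid.1.choose hid.1.choose_spec).choose

theorem basePS_good {𝒜 : Set (RelStruct μ)} (V : Type) [Infinite V] (hid : IsIdeal 𝒜) :
    Good 𝒜 (basePS (μ := μ) V hid) :=
  (plant_lemma (V := V) hid hid.1.choose hid.1.choose_spec).choose_spec.1

open scoped Classical in
/-- The transfinite chain of good countable partial structures, with unions at limits. -/
noncomputable def ordChain {𝒜 : Set (RelStruct μ)} {V : Type} [Infinite V] [Nonempty V]
    [LinearOrder V] [WellFoundedLT V]
    (huniv : ¬(Set.univ : Set V).Countable) (hid : IsIdeal 𝒜)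
    (hAP : AmalgamationProperty 𝒜) (rep : V → RelStruct μ) : V → PS μ V :=
  WellFounded.fix wellFounded_lt fun α ih =>
    nextPS huniv hid hAP
      (if h : ∃ β, β < α then PS.iUnionPS (fun β : ↥(Set.Iio α) => ih β.1 β.2)
       else basePS V hid) (rep α)

open scoped Classical in
theorem ordChain_eq {𝒜 : Set (RelStruct μ)} {V : Type} [Infinite V] [Nonempty V]
    [LinearOrder V] [WellFoundedLT V]
    (huniv : ¬(Set.univ : Set V).Countable) (hid : IsIdeal 𝒜)
    (hAP : AmalgamationProperty 𝒜) (rep : V → RelStruct μ) (α : V) :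
    ordChain huniv hid hAP rep α =
      nextPS huniv hid hAP
        (if _ : ∃ β, β < α then
          PS.iUnionPS (fun β : ↥(Set.Iio α) => ordChain huniv hid hAP rep β.1)
         else basePS V hid) (rep α) := by
  rw [ordChain, WellFounded.fix_eq]

open scoped Classical in
theorem ordChain_main {𝒜 : Set (RelStruct μ)} {V : Type} [Infinite V] [Nonempty V]
    [LinearOrder V] [WellFoundedLT V]
    (huniv : ¬(Set.univ : Set V).Countable) (hid : IsIdeal 𝒜)
    (hAP : AmalgamationProperty 𝒜) (rep : V → RelStruct μ) (hrep : ∀ α, rep α ∈ 𝒜)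
    (hcnt : ∀ α : V, (Set.Iio α).Countable) :
    ∀ α, Good 𝒜 (ordChain huniv hid hAP rep α) ∧
      (∀ β, β < α → PS.le (ordChain huniv hid hAP rep β) (ordChain huniv hid hAP rep α)) ∧
      Embeds (rep α) (structOn (ordChain huniv hid hAP rep α)
        (ordChain huniv hid hAP rep α).s) := by
  intro α
  induction α using WellFoundedLT.induction with
  | _ α IH =>
    set Pr : PS μ V := (if _ : ∃ β, β < α then
        PS.iUnionPS (fun β : ↥(Set.Iio α) => ordChain huniv hid hAP rep β.1)
      else basePS V hid) with hPr
    have hPrGood : Good 𝒜 Pr ∧ ∀ β, β < α → PS.le (ordChain huniv hid hAP rep β) Pr := by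
      by_cases h : ∃ β, β < α
      · rw [hPr, dif_pos h]
        haveI : Nonempty ↥(Set.Iio α) := ⟨⟨h.choose, h.choose_spec⟩⟩
        haveI : Countable ↥(Set.Iio α) := (hcnt α).to_subtype
        have hdir : ∀ a b : ↥(Set.Iio α),
            PS.le (ordChain huniv hid hAP rep a.1) (ordChain huniv hid hAP rep b.1) ∨
            PS.le (ordChain huniv hid hAP rep b.1) (ordChain huniv hid hAP rep a.1) := by
          intro a b
          rcases lt_trichotomy a.1 b.1 with hab | hab | hab
          · exact Or.inl ((IH b.1 b.2).2.1 a.1 hab)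
          · rw [hab]; exact Or.inl (PS.le.refl _)
          · exact Or.inr ((IH a.1 a.2).2.1 b.1 hab)
        constructor
        · exact good_iUnionPS hid hdir fun a => (IH a.1 a.2).1
        · intro β hβ
          exact le_iUnionPS hdir ⟨β, hβ⟩
      · rw [hPr, dif_neg h]
        exact ⟨basePS_good V hid, fun β hβ => absurd ⟨β, hβ⟩ h⟩
    have hspec := nextPS_spec huniv hid hAP hPrGood.1 (hrep α)
    have heq : ordChain huniv hid hAP rep α = nextPS huniv hid hAP Pr (rep α) := by
      rw [ordChain_eq]
    rw [heq]
    exact ⟨hspec.2.1, fun β hβ => PS.le.trans (hPrGood.2 β hβ) hspec.1, hspec.2.2⟩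

/-- The ambient ordinal type of cardinality `ℵ₁`. -/
abbrev OT : Type := (Cardinal.aleph 1).ord.ToType

instance : Infinite OT := by
  rw [Cardinal.infinite_iff, Cardinal.mk_toType, Cardinal.card_ord]
  exact Cardinal.aleph0_lt_aleph_one.le

theorem OT_not_countable : ¬(Set.univ : Set OT).Countable := by
  intro h
  rw [Set.countable_univ_iff] at h
  have h2 : Cardinal.mk OT ≤ Cardinal.aleph0 := Cardinal.mk_le_aleph0
  rw [Cardinal.mk_toType, Cardinal.card_ord] at h2
  exact absurd h2 (not_le.mpr Cardinal.aleph0_lt_aleph_one)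

theorem OT_Iio_countable : ∀ α : OT, (Set.Iio α).Countable := fun α =>
  (Cardinal.countable_iff_lt_aleph_one _).mpr (Cardinal.mk_Iio_ord_toType α)

end RepAux

open RepAux in
open RelStruct in
/-- Every ideal of finite structures of signature `μ` that has the amalgamation
property and has at most ℵ₁ isomorphism types is representable. -/
theorem representable_of_amalgamation_aleph1 {I : Type} {μ : I → ℕ}
    (𝒜 : Set (RelStruct μ)) (h𝒜 : IsIdeal 𝒜) (hAP : AmalgamationProperty 𝒜)
    (hcard : numTypes 𝒜 ≤ Cardinal.aleph 1) :
    ∃ A : RelStruct μ, age A = 𝒜 := by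
  classical
  -- choose representatives of the isomorphism classes, indexed by `OT`
  have hrequiv : Equivalence (fun A B : ↥𝒜 => Iso A.1 B.1) :=
    ⟨fun A => iso_refl _, fun h => iso_symm h, fun h h' => iso_trans h h'⟩
  haveI hQne : Nonempty (Quot fun A B : ↥𝒜 => Iso A.1 B.1) := by
    obtain ⟨B0, hB0⟩ := h𝒜.1
    exact ⟨Quot.mk _ ⟨B0, hB0⟩⟩
  have hmk : Cardinal.mk (Quot fun A B : ↥𝒜 => Iso A.1 B.1) ≤
      Cardinal.mk (ULift.{1} OT) := by
    rw [Cardinal.mk_uLift, Cardinal.mk_toType, Cardinal.card_ord, Cardinal.lift_aleph,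
      Ordinal.lift_one]
    exact hcard
  obtain ⟨j0⟩ := (Cardinal.le_def _ _).mp hmk
  set j : (Quot fun A B : ↥𝒜 => Iso A.1 B.1) → OT := fun q => (j0 q).down with hj
  have hjinj : Function.Injective j := fun a b hab =>
    j0.injective (ULift.down_injective hab)
  set σ : OT → Quot (fun A B : ↥𝒜 => Iso A.1 B.1) := Function.invFun j with hσ
  have hσsurj : Function.Surjective σ := Function.invFun_surjective hjinj
  set rep : OT → RelStruct μ := fun α => ((σ α).out).1 with hrepdef
  have hrepmem : ∀ α, rep α ∈ 𝒜 := fun α => ((σ α).out).2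
  have hrepcover : ∀ B, B ∈ 𝒜 → ∃ α : OT, Iso B (rep α) := by
    intro B hB
    obtain ⟨α, hα⟩ := hσsurj (Quot.mk _ ⟨B, hB⟩)
    refine ⟨α, ?_⟩
    have h1 : Quot.mk (fun A B : ↥𝒜 => Iso A.1 B.1) ((σ α).out) =
        Quot.mk (fun A B : ↥𝒜 => Iso A.1 B.1) (⟨B, hB⟩ : ↥𝒜) := by
      rw [Quot.out_eq, hα]
    exact iso_symm (hrequiv.eqvGen_iff.mp (Quot.eq.mp h1))
  -- the transfinite chain and its union
  set C := ordChain (V := OT) OT_not_countable h𝒜 hAP rep with hC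
  have hmain := ordChain_main (V := OT) OT_not_countable h𝒜 hAP rep hrepmem OT_Iio_countable
  have hdir : ∀ a b : OT, PS.le (C a) (C b) ∨ PS.le (C b) (C a) := by
    intro a b
    rcases lt_trichotomy a b with h | h | h
    · exact Or.inl ((hmain b).2.1 a h)
    · rw [h]; exact Or.inl (PS.le.refl _)
    · exact Or.inr ((hmain a).2.1 b h)
  set U := PS.iUnionPS C with hU
  refine ⟨structOn U U.s, Set.Subset.antisymm ?_ ?_⟩
  · -- the age of the union is contained in 𝒜
    rintro B ⟨hBfin, f, hfinj, hfrel⟩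
    haveI := hBfin
    set t : Set OT := Set.range (fun b => Subtype.val (f b)) with ht
    have htsub : t ⊆ U.s := by rintro v ⟨b, rfl⟩; exact (f b).2
    have htfin : t.Finite := Set.finite_range _
    obtain ⟨a, ha⟩ := finite_subset_iUnionPS hdir htfin htsub
    have h1 : structOn (C a) t ∈ 𝒜 := (hmain a).1.2 t ha htfin
    have h2 : Embeds (structOn U t) (structOn (C a) t) :=
      embeds_structOn_le' (le_iUnionPS hdir a) ha (Set.Subset.refl _)
    have h3 : Embeds B (structOn U t) := by
      refine ⟨fun b => ⟨Subtype.val (f b), ⟨b, rfl⟩⟩, ?_, ?_⟩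
      · intro a' b' hab
        exact hfinj (Subtype.ext (Subtype.mk_eq_mk.mp hab))
      · intro i x
        exact hfrel i x
    exact h𝒜.2.2.1 B (structOn (C a) t) hBfin (Embeds.trans h3 h2) h1
  · -- every member of 𝒜 embeds into the union
    intro B hB
    refine ⟨h𝒜.2.1 B hB, ?_⟩
    obtain ⟨α, hiso⟩ := hrepcover B hB
    have h1 : Embeds (rep α) (structOn (C α) (C α).s) := (hmain α).2.2
    have h2 : Embeds (structOn (C α) (C α).s) (structOn U U.s) :=
      embeds_structOn_le (le_iUnionPS hdir α) (Set.Subset.refl _)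
        (fun v hv => Set.mem_iUnion.mpr ⟨α, hv⟩)
    exact Embeds.trans (Embeds.trans (Iso.embeds hiso) h1) h2
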